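/- Let G be a group equipped with a proper left-invariant metric d_G (bounded sets are finite) and suppose G is locally finite. Then the following are equivalent: (a) dim_AN(G, d_G) = 0; (b) there is a constant c > 0 such that for every r > 0 the subgroup of G generated by the open ball B(1, r) is contained in B(1, c·r). -/

import Mathlib

open Function SemidirectProduct ENNReal

noncomputable section

/-- Word length of `g` with respect to a symmetrized generating set `S`. -/
def wordLength {G : Type*} [Group G] (S : Set G) (g : G) : ℕ :=
  sInf {m | ∃ w : List G, w.length = m ∧ (∀ x ∈ w, x ∈ S ∨ x⁻¹ ∈ S) ∧ w.prod = g}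

/-- The word metric on a group. -/
def wordDist {G : Type*} [Group G] (S : Set G) (g h : G) : ℝ :=
  wordLength S (g⁻¹ * h)

/-- Growth function: the number of elements in the open ball `B(1,r)` of the word metric. -/
def growth {G : Type*} [Group G] (S : Set G) (r : ℝ) : ℕ :=
  Nat.card {g : G | (wordLength S g : ℝ) < r}

/-- `x` and `y` are in the same `r`-component of `A ⊆ X` (distance function `d`):
they are joined by an `r`-path inside `A`. -/
def ChainIn {X : Type*} (d : X → X → ℝ) (A : Set X) (r : ℝ) (x y : X) : Prop :=
  ∃ (m : ℕ) (c : Fin (m + 1) → X), (∀ i, c i ∈ A) ∧ c 0 = x ∧ c (Fin.last m) = y ∧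
    ∀ i : Fin m, d (c i.castSucc) (c i.succ) < r

/-- `D` is an `n`-dimensional control function for the distance function `d` on `X`:
for every `r > 0` there is a cover by `n+1` sets of Lebesgue number at least `r`
whose `r`-components have diameter at most `D r`. -/
def IsControlFunction {X : Type*} (d : X → X → ℝ) (n : ℕ) (D : ℝ → ℝ≥0∞) : Prop :=
  ∀ r : ℝ, 0 < r → ∃ P : Fin (n + 1) → Set X,
    (⋃ i, P i) = Set.univ ∧
    (∀ x : X, ∃ i, {y | d x y < r} ⊆ P i) ∧
    ∀ i, ∀ x ∈ P i, ∀ y ∈ P i, ChainIn d (P i) r x y → ENNReal.ofReal (d x y) ≤ D r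

/-- `dim_AN(X,d) ≤ n`: there is an `n`-dimensional control function which is a dilation. -/
def ANdimLE {X : Type*} (d : X → X → ℝ) (n : ℕ) : Prop :=
  ∃ C : ℝ, 0 < C ∧ IsControlFunction d n fun r => ENNReal.ofReal (C * r)

/-- `f` weakly dominates `g`. -/
def WeaklyDominates (f g : ℝ → ℝ) : Prop :=
  ∃ lam C : ℝ, 1 ≤ lam ∧ 0 ≤ C ∧ ∀ t : ℝ, 0 ≤ t → g t ≤ lam * f (lam * t + C) + C

/-- The base group of the restricted wreath product `H ≀ G`:
finitely supported functions `G → H` under pointwise multiplication. -/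
def WreathBase (H G : Type*) [Group H] [Group G] : Subgroup (G → H) where
  carrier := {f | (Function.mulSupport f).Finite}
  one_mem' := by simp [Function.mulSupport_one]
  mul_mem' {a b} ha hb := ((ha.union hb).subset (Function.mulSupport_mul a b))
  inv_mem' {a} ha := by simpa [Function.mulSupport_inv] using ha

variable (H G : Type*) [Group H] [Group G]

/-- The shift action of `b : G` on the base group, `(b • f) γ = f (b⁻¹ γ)`. -/
def wreathShift (b : G) : WreathBase H G ≃* WreathBase H G where
  toFun f := ⟨fun x => f.1 (b⁻¹ * x), by
    have h : Function.mulSupport (fun x => f.1 (b⁻¹ * x)) ⊆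
        (fun x : G => b⁻¹ * x) ⁻¹' Function.mulSupport f.1 := fun x hx => hx
    exact (f.2.preimage ((mul_right_injective b⁻¹).injOn)).subset h⟩
  invFun f := ⟨fun x => f.1 (b * x), by
    have h : Function.mulSupport (fun x => f.1 (b * x)) ⊆
        (fun x : G => b * x) ⁻¹' Function.mulSupport f.1 := fun x hx => hx
    exact (f.2.preimage ((mul_right_injective b).injOn)).subset h⟩
  left_inv f := by ext x; simp
  right_inv f := by ext x; simp
  map_mul' f g := rfl

/-- The action of `G` on the base group of the wreath product. -/
def wreathAct : G →* MulAut (WreathBase H G) where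
  toFun := wreathShift H G
  map_one' := by
    refine MulEquiv.ext fun f => Subtype.ext (funext fun x => ?_)
    simp [wreathShift]
  map_mul' a b := by
    refine MulEquiv.ext fun f => Subtype.ext (funext fun x => ?_)
    simp [wreathShift, mul_assoc]

/-- The restricted wreath product `H ≀ G`. -/
abbrev Wreath := WreathBase H G ⋊[wreathAct H G] G

/-- The element of the base group supported at `1` with value `a`. -/
def atOne (a : H) : WreathBase H G :=
  letI := Classical.decEq G
  ⟨fun x => if x = 1 then a else 1, Set.Finite.subset (Set.finite_singleton 1) (by
    intro x hx
    simp only [Function.mem_mulSupport] at hx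
    simp only [Set.mem_singleton_iff]
    by_contra h
    exact hx (if_neg h))⟩

/-- The `(g,a)`-bulb `g·a·g⁻¹` in `H ≀ G`. -/
def bulb (g : G) (a : H) : Wreath H G :=
  inr g * inl (atOne H G a) * (inr g)⁻¹

/-- The generating set `(H ∖ {1}) ∪ S` of `H ≀ G`. -/
def wreathGen (S : Set G) : Set (Wreath H G) :=
  {w | ∃ a : H, a ≠ 1 ∧ w = inl (atOne H G a)} ∪ {w | ∃ s ∈ S, w = inr s}

/-- The word metric on `H ≀ G` with respect to the generating set `(H ∖ {1}) ∪ S`. -/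
def wreathDist (S : Set G) (x y : Wreath H G) : ℝ :=
  wordLength (wreathGen H G S) (x⁻¹ * y)

/-- The metric on the kernel `K` of `H ≀ G → G` induced from the word metric on `H ≀ G`. -/
def kerDist (S : Set G) (x y : (rightHom : Wreath H G →* G).ker) : ℝ :=
  wreathDist H G S x.1 y.1


/-- For a locally finite group `G` with a proper left-invariant metric,
`dim_AN(G,d_G) = 0` iff there is `c > 0` such that for every `r > 0` the subgroup
generated by `B(1,r)` is contained in `B(1, c·r)`. -/
theorem statement_0 {G : Type*} [Group G] [MetricSpace G]
    (hinv : ∀ a x y : G, dist (a * x) (a * y) = dist x y)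
    (hproper : ∀ s : Set G, Bornology.IsBounded s → s.Finite)
    (hlocfin : ∀ F : Finset G, ((Subgroup.closure (F : Set G) : Subgroup G) : Set G).Finite) :
    ANdimLE (dist : G → G → ℝ) 0 ↔
      ∃ c : ℝ, 0 < c ∧ ∀ r : ℝ, 0 < r →
        ((Subgroup.closure (Metric.ball (1 : G) r) : Subgroup G) : Set G) ⊆
          Metric.ball (1 : G) (c * r) := by
  have dist_one : ∀ x y : G, dist x y = dist (1 : G) (x⁻¹ * y) := by
    intro x y
    have := hinv x⁻¹ x y
    simpa using this.symm
  constructor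
  · rintro ⟨C, hC, hctrl⟩
    refine ⟨C + 1, by linarith, fun r hr => ?_⟩
    obtain ⟨P, hcov, _, hdiam⟩ := hctrl r hr
    have hall : ∀ x : G, x ∈ P 0 := by
      intro x
      have hx : x ∈ ⋃ i, P i := hcov ▸ Set.mem_univ x
      obtain ⟨i, hi⟩ := Set.mem_iUnion.1 hx
      rwa [Subsingleton.elim (0 : Fin 1) i]
    intro g hg
    have hg' : g ∈ Submonoid.closure (Metric.ball (1 : G) r ∪ (Metric.ball (1 : G) r)⁻¹) := by
      rw [← Subgroup.closure_toSubmonoid]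
      exact hg
    obtain ⟨l, hl, hprod⟩ := Submonoid.exists_list_of_mem_closure hg'
    have hball : ∀ s ∈ l, dist (1 : G) s < r := by
      intro s hs
      rcases hl s hs with h | h
      · rw [dist_comm]; exact Metric.mem_ball.1 h
      · have h1 : dist s⁻¹ (1 : G) < r := Metric.mem_ball.1 h
        have e : dist (1 : G) s = dist s⁻¹ (1 : G) := by
          rw [dist_comm, dist_one s 1, mul_one, dist_comm]
        rw [e]; exact h1
    have hchain : ChainIn (dist : G → G → ℝ) (P 0) r 1 g := by
      refine ⟨l.length, fun i => (l.take i.1).prod, fun i => hall _, by simp, ?_, ?_⟩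
      · simp [Fin.last, hprod]
      · intro i
        have hlt : i.1 < l.length := i.2
        have h1 : (l.take (i.1 + 1)).prod = (l.take i.1).prod * l.get i :=
          List.prod_take_succ l i.1 hlt
        have h2 : dist ((l.take i.1).prod) ((l.take i.1).prod * l.get i)
            = dist (1 : G) (l.get i) := by
          have := hinv ((l.take i.1).prod) 1 (l.get i)
          simpa using this
        show dist ((l.take i.castSucc.1).prod) ((l.take i.succ.1).prod) < r
        rw [Fin.coe_castSucc, Fin.val_succ, h1, h2]
        exact hball _ (l.get_mem ⟨i.1, i.2⟩)
    have := hdiam 0 1 (hall 1) g (hall g) hchain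
    have hCr : (0 : ℝ) ≤ C * r := le_of_lt (mul_pos hC hr)
    have hdg : dist (1 : G) g ≤ C * r := by
      rwa [ENNReal.ofReal_le_ofReal_iff hCr] at this
    have : dist g (1 : G) < (C + 1) * r := by
      rw [dist_comm]
      calc dist (1 : G) g ≤ C * r := hdg
        _ < (C + 1) * r := by nlinarith
    exact Metric.mem_ball.2 this
  · rintro ⟨c, hc, hsub⟩
    refine ⟨c, hc, fun r hr => ?_⟩
    refine ⟨fun _ => Set.univ, by rw [Set.iUnion_const], fun x => ⟨0, Set.subset_univ _⟩, ?_⟩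
    rintro i x - y - ⟨m, ch, -, h0, hlast, hstep⟩
    have key : ∀ j : ℕ, ∀ hj : j ≤ m,
        x⁻¹ * ch ⟨j, Nat.lt_succ_of_le hj⟩ ∈ Subgroup.closure (Metric.ball (1 : G) r) := by
      intro j
      induction j with
      | zero =>
        intro hj
        have : ch ⟨0, Nat.lt_succ_of_le hj⟩ = x := h0
        rw [this, inv_mul_cancel]
        exact Subgroup.one_mem _
      | succ k ih =>
        intro hj
        have hk : k ≤ m := Nat.le_of_succ_le hj
        have hkm : k < m := hj
        set a := ch ⟨k, Nat.lt_succ_of_le hk⟩ with ha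
        set b := ch ⟨k + 1, Nat.lt_succ_of_le hj⟩ with hb
        have hstep' : dist a b < r := by
          have := hstep ⟨k, hkm⟩
          simpa [Fin.castSucc, Fin.succ, ha, hb] using this
        have hmem : a⁻¹ * b ∈ Metric.ball (1 : G) r := by
          rw [Metric.mem_ball, dist_comm, ← dist_one]
          exact hstep'
        have : x⁻¹ * b = (x⁻¹ * a) * (a⁻¹ * b) := by group
        rw [this]
        exact mul_mem (ih hk) (Subgroup.subset_closure hmem)
    have hxy : x⁻¹ * y ∈ Subgroup.closure (Metric.ball (1 : G) r) := by
      have := key m le_rfl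
      rwa [show (⟨m, Nat.lt_succ_of_le le_rfl⟩ : Fin (m + 1)) = Fin.last m from rfl, hlast] at this
    have hb : x⁻¹ * y ∈ Metric.ball (1 : G) (c * r) := hsub r hr hxy
    have : dist x y < c * r := by
      rw [dist_one x y, dist_comm]
      exact Metric.mem_ball.1 hb
    exact ENNReal.ofReal_le_ofReal this.le
end
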